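/- Let ε > 0 and define h_ε(s) = (s + ε)·(log(s + ε) − 1) + 1 for s ≥ 0. Then for all real u, v ≥ 0, h_ε(u) + h_ε(v) − 2·h_ε((u + v)/2) ≥ (u − v)² / (4·(max(u, v) + ε)). -/

import Mathlib

private lemma lemA (t : ℝ) (ht : 1 ≤ t) : 2 * t * Real.log t ≤ t ^ 2 - 1 := by
  have hD : ∀ s : ℝ, s ≠ 0 → HasDerivAt (fun s : ℝ => s ^ 2 - 1 - 2 * s * Real.log s)
      (2 * s - (2 * Real.log s + 2 * s * s⁻¹)) s := by
    intro s hs0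
    have h1 : HasDerivAt (fun s : ℝ => s ^ 2 - 1) (2 * s) s := by
      simpa using ((hasDerivAt_pow 2 s).sub_const 1)
    have h2 : HasDerivAt (fun s : ℝ => 2 * s * Real.log s)
        (2 * Real.log s + 2 * s * s⁻¹) s := by
      exact (((hasDerivAt_id s).const_mul 2).mul (Real.hasDerivAt_log hs0)).congr_deriv (by simp)
    exact h1.sub h2
  have key : MonotoneOn (fun s : ℝ => s ^ 2 - 1 - 2 * s * Real.log s) (Set.Ici 1) := by
    apply monotoneOn_of_deriv_nonneg (convex_Ici 1)
    · apply ContinuousOn.sub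
      · fun_prop
      · apply ContinuousOn.mul (by fun_prop)
        exact Real.continuousOn_log.mono (by intro s hs; simp at hs ⊢; linarith)
    · intro s hs
      rw [interior_Ici] at hs
      have hs0 : s ≠ 0 := by simp at hs; intro h; rw [h] at hs; linarith
      exact (hD s hs0).differentiableAt.differentiableWithinAt
    · intro s hs
      rw [interior_Ici, Set.mem_Ioi] at hs
      have hs0 : s ≠ 0 := by linarith
      rw [(hD s hs0).deriv]
      have hlog : Real.log s ≤ s - 1 := Real.log_le_sub_one_of_pos (by linarith)
      rw [mul_inv_cancel_right₀ hs0]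
      linarith
  have h0 : (fun s : ℝ => s ^ 2 - 1 - 2 * s * Real.log s) 1 ≤
      (fun s : ℝ => s ^ 2 - 1 - 2 * s * Real.log s) t :=
    key (by simp) (by simpa using ht) ht
  simp [Real.log_one] at h0
  linarith

private lemma lemB (t : ℝ) (ht0 : 0 < t) (ht1 : t ≤ 1) :
    Real.log t ≤ (t - 1) - (t - 1) ^ 2 / 2 := by
  have hD : ∀ s : ℝ, 0 < s → HasDerivAt (fun s : ℝ => s - 1 - Real.log s - (s - 1) ^ 2 / 2)
      (1 - s⁻¹ - (s - 1)) s := by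
    intro s hs0
    have h1 : HasDerivAt (fun s : ℝ => s - 1 - Real.log s) (1 - s⁻¹) s :=
      ((hasDerivAt_id s).sub_const 1).sub (Real.hasDerivAt_log hs0.ne')
    have h2 : HasDerivAt (fun s : ℝ => (s - 1) ^ 2 / 2) (s - 1) s := by
      have := (((hasDerivAt_id s).sub_const 1).pow 2).div_const 2
      simpa using this
    exact h1.sub h2
  have key : AntitoneOn (fun s : ℝ => s - 1 - Real.log s - (s - 1) ^ 2 / 2) (Set.Icc t 1) := by
    apply antitoneOn_of_deriv_nonpos (convex_Icc t 1)
    · apply ContinuousOn.sub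
      apply ContinuousOn.sub
      · fun_prop
      · exact Real.continuousOn_log.mono (by intro s hs; simp at hs ⊢; linarith [hs.1])
      · fun_prop
    · intro s hs
      rw [interior_Icc] at hs
      exact (hD s (lt_trans ht0 hs.1)).differentiableAt.differentiableWithinAt
    · intro s hs
      rw [interior_Icc] at hs
      obtain ⟨hs1, hs2⟩ := hs
      have hs0 : 0 < s := lt_trans ht0 hs1
      rw [(hD s hs0).deriv]
      have hnn : (s - 1) ^ 2 / s ≥ 0 := by positivity
      have hexp : 1 - s⁻¹ - (s - 1) = -((s - 1) ^ 2 / s) := by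
        field_simp; ring
      rw [hexp]
      linarith
  have h0 : (fun s : ℝ => s - 1 - Real.log s - (s - 1) ^ 2 / 2) 1 ≤
      (fun s : ℝ => s - 1 - Real.log s - (s - 1) ^ 2 / 2) t :=
    key (by simp [ht1]) (by simp [ht1, ht0.le]) ht1
  simp [Real.log_one] at h0
  linarith

private lemma lemC (t : ℝ) (ht : 0 < t) :
    (t - 1) ^ 2 / (2 * max 1 t) ≤ t - 1 - Real.log t := by
  rcases le_total 1 t with h | h
  · rw [max_eq_right h]
    have hA := lemA t h
    rw [div_le_iff₀ (by linarith)]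
    nlinarith [Real.log_le_sub_one_of_pos ht]
  · rw [max_eq_left h]
    have hB := lemB t ht h
    have : (t - 1) ^ 2 / (2 * 1) = (t - 1) ^ 2 / 2 := by norm_num
    rw [this]
    linarith

private lemma lemD (x y : ℝ) (hx : 0 < x) (hy : 0 < y) :
    (x - y) ^ 2 / (2 * max x y) ≤ x * Real.log x - x * Real.log y - (x - y) := by
  have ht : 0 < y / x := div_pos hy hx
  have hC := lemC (y / x) ht
  have hlog : Real.log (y / x) = Real.log y - Real.log x := Real.log_div hy.ne' hx.ne'
  have hmax : x * max 1 (y / x) = max x y := by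
    rw [mul_max_of_nonneg _ _ hx.le, mul_one, mul_div_cancel₀ _ hx.ne']
  have hx2 : (0:ℝ) < x ^ 2 := by positivity
  -- multiply hC by x
  have hmul := mul_le_mul_of_nonneg_left hC hx.le
  have hLHS : x * ((y / x - 1) ^ 2 / (2 * max 1 (y / x))) =
      (x - y) ^ 2 / (2 * max x y) := by
    rw [← hmax]
    have hmaxpos : 0 < max 1 (y / x) := lt_max_of_lt_left one_pos
    field_simp
    ring
  have hRHS : x * (y / x - 1 - Real.log (y / x)) =
      x * Real.log x - x * Real.log y - (x - y) := by
    rw [hlog]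
    field_simp
    ring
  rw [hLHS, hRHS] at hmul
  exact hmul

/-- Lower bound for the integrand of the regularized Gajewski semimetric:
with `hε(s) = (s + ε)(log(s + ε) − 1) + 1`, for all `u, v ≥ 0`,
`hε(u) + hε(v) − 2 hε((u + v)/2) ≥ (u − v)² / (4 (max u v + ε))`. -/
theorem stmt_5 (ε : ℝ) (hε : 0 < ε) (hfun : ℝ → ℝ)
    (hdef : ∀ s : ℝ, 0 ≤ s → hfun s = (s + ε) * (Real.log (s + ε) - 1) + 1)
    (u v : ℝ) (hu : 0 ≤ u) (hv : 0 ≤ v) :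
    hfun u + hfun v - 2 * hfun ((u + v) / 2)
      ≥ (u - v) ^ 2 / (4 * (max u v + ε)) := by
  set m : ℝ := (u + v) / 2 with hmdef
  have hm : 0 ≤ m := by positivity
  rw [hdef u hu, hdef v hv, hdef m hm]
  set x1 : ℝ := u + ε
  set x2 : ℝ := v + ε
  set y : ℝ := m + ε
  have hx1 : 0 < x1 := by positivity
  have hx2 : 0 < x2 := by positivity
  have hy : 0 < y := by positivity
  have hsum : x1 + x2 = 2 * y := by simp only [x1, x2, y, hmdef]; ring
  have hM : 0 < max u v + ε := by positivity
  have h1 := lemD x1 y hx1 hy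
  have h2 := lemD x2 y hx2 hy
  have hmax1 : max x1 y ≤ max u v + ε := by
    apply max_le
    · simp only [x1]; linarith [le_max_left u v]
    · simp only [y, hmdef]
      have := le_max_left u v
      have := le_max_right u v
      linarith
  have hmax2 : max x2 y ≤ max u v + ε := by
    apply max_le
    · simp only [x2]; linarith [le_max_right u v]
    · simp only [y, hmdef]
      have := le_max_left u v
      have := le_max_right u v
      linarith
  have hmp1 : 0 < max x1 y := lt_max_of_lt_left hx1
  have hmp2 : 0 < max x2 y := lt_max_of_lt_left hx2
  have hb1 : (x1 - y) ^ 2 / (2 * (max u v + ε)) ≤ (x1 - y) ^ 2 / (2 * max x1 y) :=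
    div_le_div_of_nonneg_left (by positivity) (by positivity) (by linarith)
  have hb2 : (x2 - y) ^ 2 / (2 * (max u v + ε)) ≤ (x2 - y) ^ 2 / (2 * max x2 y) :=
    div_le_div_of_nonneg_left (by positivity) (by positivity) (by linarith)
  have hd1 : x1 - y = (u - v) / 2 := by simp only [x1, y, hmdef]; ring
  have hd2 : x2 - y = (v - u) / 2 := by simp only [x2, y, hmdef]; ring
  have hsq1 : (x1 - y) ^ 2 = (u - v) ^ 2 / 4 := by rw [hd1]; ring
  have hsq2 : (x2 - y) ^ 2 = (u - v) ^ 2 / 4 := by rw [hd2]; ring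
  rw [hsq1] at hb1 h1
  rw [hsq2] at hb2 h2
  have hfinal : (u - v) ^ 2 / 4 / (2 * (max u v + ε)) + (u - v) ^ 2 / 4 / (2 * (max u v + ε))
      = (u - v) ^ 2 / (4 * (max u v + ε)) := by
    field_simp
    ring
  have hident : x1 * (Real.log x1 - 1) + 1 + (x2 * (Real.log x2 - 1) + 1)
      - 2 * (y * (Real.log y - 1) + 1)
      = (x1 * Real.log x1 - x1 * Real.log y - (x1 - y))
        + (x2 * Real.log x2 - x2 * Real.log y - (x2 - y)) := by
    linear_combination (- Real.log y) * hsum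
  rw [ge_iff_le, ← hfinal]
  calc (u - v) ^ 2 / 4 / (2 * (max u v + ε)) + (u - v) ^ 2 / 4 / (2 * (max u v + ε))
      ≤ (x1 * Real.log x1 - x1 * Real.log y - (x1 - y))
        + (x2 * Real.log x2 - x2 * Real.log y - (x2 - y)) := by
        have := le_trans hb1 h1
        have := le_trans hb2 h2
        linarith
    _ = _ := hident.symm
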